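/- For real ν, μ with Re ν > 0 and Re μ > 0, the integral from 0 to 1 of (x^{μ-1} - x^{ν-1})/(1-x) dx equals ψ(ν) - ψ(μ). -/

import Mathlib

open Real MeasureTheory Filter Set Topology intervalIntegral

section aux

lemma ofReal_beta_integrand (a b : ℝ) {x : ℝ} (hx : x ∈ Set.uIcc (0:ℝ) 1) :
    ((x:ℂ) ^ ((a:ℂ) - 1) * ((1:ℂ) - x) ^ ((b:ℂ) - 1)) =
      ((x ^ (a - 1) * (1 - x) ^ (b - 1) : ℝ) : ℂ) := by
  rw [Set.uIcc_of_le zero_le_one] at hx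
  rw [Complex.ofReal_mul, Complex.ofReal_cpow hx.1, Complex.ofReal_cpow (by linarith [hx.2])]
  push_cast
  ring

lemma betaReal_intervalIntegrable {a b : ℝ} (ha : 0 < a) (hb : 0 < b) :
    IntervalIntegrable (fun x : ℝ => x ^ (a - 1) * (1 - x) ^ (b - 1)) volume 0 1 := by
  have h := Complex.betaIntegral_convergent (u := (a:ℂ)) (v := (b:ℂ)) (by simpa) (by simpa)
  have h2 : IntervalIntegrable
      (fun x : ℝ => ((x ^ (a - 1) * (1 - x) ^ (b - 1) : ℝ) : ℂ)) volume 0 1 := by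
    apply h.congr
    intro x hx
    exact ofReal_beta_integrand a b (uIoc_subset_uIcc hx)
  rw [intervalIntegrable_iff] at h2 ⊢
  simpa [Complex.ofReal_re, IntegrableOn] using h2.re

lemma betaReal_eq {a b : ℝ} (ha : 0 < a) (hb : 0 < b) :
    ∫ x in (0:ℝ)..1, x ^ (a - 1) * (1 - x) ^ (b - 1)
      = Real.Gamma a * Real.Gamma b / Real.Gamma (a + b) := by
  have hab : Complex.Gamma ((a:ℂ) + b) ≠ 0 :=
    Complex.Gamma_ne_zero_of_re_pos (by simp; positivity)
  have hbeta : Complex.betaIntegral a b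
      = Complex.Gamma a * Complex.Gamma b / Complex.Gamma ((a:ℂ) + b) := by
    rw [eq_div_iff hab, mul_comm, ← Complex.Gamma_mul_Gamma_eq_betaIntegral (by simpa) (by simpa)]
  have hcongr : Complex.betaIntegral a b
      = ((∫ x in (0:ℝ)..1, x ^ (a - 1) * (1 - x) ^ (b - 1) : ℝ) : ℂ) := by
    rw [Complex.betaIntegral, ← intervalIntegral.integral_ofReal]
    exact intervalIntegral.integral_congr fun x hx => ofReal_beta_integrand a b hx
  have : ((∫ x in (0:ℝ)..1, x ^ (a - 1) * (1 - x) ^ (b - 1) : ℝ) : ℂ)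
      = ((Real.Gamma a * Real.Gamma b / Real.Gamma (a + b) : ℝ) : ℂ) := by
    rw [← hcongr, hbeta]
    push_cast [← Complex.Gamma_ofReal]
    norm_num
  exact_mod_cast this

-- |x^p - x^q| ≤ |p - q| * x^(min p q) * (-log x) for x ∈ (0,1)
lemma abs_rpow_sub_rpow_le {x p q : ℝ} (hx0 : 0 < x) (hx1 : x ≤ 1) :
    |x ^ p - x ^ q| ≤ |p - q| * x ^ (min p q) * (-Real.log x) := by
  have key : ∀ r s : ℝ, r ≤ s → x ^ r - x ^ s ≤ (s - r) * x ^ r * (-Real.log x) := by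
    intro r s hrs
    have h1 : x ^ s = x ^ r * Real.exp ((s - r) * Real.log x) := by
      rw [Real.rpow_def_of_pos hx0, Real.rpow_def_of_pos hx0, ← Real.exp_add]
      ring_nf
    have h2 : 1 + (s - r) * Real.log x ≤ Real.exp ((s - r) * Real.log x) := by
      linarith [Real.add_one_le_exp ((s - r) * Real.log x)]
    have h3 : (0:ℝ) < x ^ r := Real.rpow_pos_of_pos hx0 r
    nlinarith [h3.le]
  have hlog : 0 ≤ -Real.log x := by
    simp only [neg_nonneg]
    exact Real.log_nonpos hx0.le hx1
  rcases le_total p q with h | h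
  · have h0 : 0 ≤ x ^ p - x ^ q := by
      have := Real.rpow_le_rpow_of_exponent_ge hx0 hx1 h
      linarith
    rw [abs_of_nonneg h0, min_eq_left h]
    calc x ^ p - x ^ q ≤ (q - p) * x ^ p * (-Real.log x) := key p q h
      _ ≤ |p - q| * x ^ p * (-Real.log x) := by
          have : q - p ≤ |p - q| := by rw [abs_sub_comm]; exact le_abs_self _
          have h3 : (0:ℝ) ≤ x ^ p := (Real.rpow_pos_of_pos hx0 p).le
          exact mul_le_mul_of_nonneg_right (mul_le_mul_of_nonneg_right this h3) hlog
  · have h0 : 0 ≤ x ^ q - x ^ p := by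
      have := Real.rpow_le_rpow_of_exponent_ge hx0 hx1 h
      linarith
    rw [abs_sub_comm, abs_of_nonneg h0, min_eq_right h]
    calc x ^ q - x ^ p ≤ (p - q) * x ^ q * (-Real.log x) := key q p h
      _ ≤ |p - q| * x ^ q * (-Real.log x) := by
          have : p - q ≤ |p - q| := le_abs_self _
          have h3 : (0:ℝ) ≤ x ^ q := (Real.rpow_pos_of_pos hx0 q).le
          exact mul_le_mul_of_nonneg_right (mul_le_mul_of_nonneg_right this h3) hlog

-- the uniform bound
lemma bound_key (μ ν : ℝ) {x ε : ℝ} (hx : x ∈ Set.Ioc (0:ℝ) 1) (hε0 : 0 < ε) (hε1 : ε ≤ 1) :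
    |(x ^ (μ - 1) - x ^ (ν - 1)) * (1 - x) ^ (ε - 1)| ≤
      2 * (x ^ (μ - 1) + x ^ (ν - 1)) + 2 * |μ - ν| * 2 ^ |min μ ν - 1| := by
  obtain ⟨hx0, hx1⟩ := hx
  have hC : (0:ℝ) ≤ 2 * |μ - ν| * 2 ^ |min μ ν - 1| := by positivity
  have hP : (0:ℝ) ≤ 2 * (x ^ (μ - 1) + x ^ (ν - 1)) := by positivity
  rcases eq_or_lt_of_le hx1 with rfl | hx1
  · simp only [Real.one_rpow, sub_self, zero_mul, abs_zero]
    linarith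
  -- now x < 1
  have h1x : 0 < 1 - x := by linarith
  have hpow : (1 - x) ^ (ε - 1) ≤ (1 - x) ^ (-1 : ℝ) :=
    Real.rpow_le_rpow_of_exponent_ge h1x (by linarith) (by linarith)
  have hpow0 : 0 ≤ (1 - x) ^ (ε - 1) := (Real.rpow_pos_of_pos h1x _).le
  have habs : |(x ^ (μ - 1) - x ^ (ν - 1)) * (1 - x) ^ (ε - 1)|
      = |x ^ (μ - 1) - x ^ (ν - 1)| * (1 - x) ^ (ε - 1) := by
    rw [abs_mul, abs_of_nonneg hpow0]
  rw [habs]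
  have hinv : (1 - x) ^ (-1 : ℝ) = (1 - x)⁻¹ := Real.rpow_neg_one _
  rcases le_total x (1/2) with hhalf | hhalf
  · -- x ≤ 1/2 : bound by 2(x^a + x^b)
    have h2 : (1 - x)⁻¹ ≤ 2 := by
      rw [inv_le_comm₀ h1x (by norm_num)]
      linarith
    have h3 : |x ^ (μ - 1) - x ^ (ν - 1)| ≤ x ^ (μ - 1) + x ^ (ν - 1) := by
      have := (Real.rpow_pos_of_pos hx0 (μ - 1)).le
      have := (Real.rpow_pos_of_pos hx0 (ν - 1)).le
      rw [abs_sub_le_iff]; constructor <;> linarith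
    calc |x ^ (μ - 1) - x ^ (ν - 1)| * (1 - x) ^ (ε - 1)
        ≤ (x ^ (μ - 1) + x ^ (ν - 1)) * (1 - x)⁻¹ := by
          rw [← hinv]
          exact mul_le_mul h3 hpow hpow0 (by positivity)
      _ ≤ (x ^ (μ - 1) + x ^ (ν - 1)) * 2 := by
          apply mul_le_mul_of_nonneg_left h2 (by positivity)
      _ ≤ 2 * (x ^ (μ - 1) + x ^ (ν - 1)) + 2 * |μ - ν| * 2 ^ |min μ ν - 1| := by linarith
  · -- 1/2 ≤ x : bound by the constant
    set m := min μ ν - 1 with hm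
    have hmin : min (μ - 1) (ν - 1) = m := by rw [hm]; rcases le_total μ ν with h|h <;> simp [h]
    have h3 : |x ^ (μ - 1) - x ^ (ν - 1)| ≤ |μ - ν| * x ^ m * (-Real.log x) := by
      have := abs_rpow_sub_rpow_le (p := μ - 1) (q := ν - 1) hx0 hx1.le
      rw [hmin] at this
      simpa using this
    have hxm : x ^ m ≤ 2 ^ |m| := by
      rcases le_total 0 m with h | h
      · have h1 : x ^ m ≤ 1 := Real.rpow_le_one hx0.le hx1.le h
        have h2 : (1:ℝ) ≤ 2 ^ |m| := Real.one_le_rpow one_le_two (abs_nonneg _)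
        linarith
      · have h1 : x ^ m ≤ (1/2:ℝ) ^ m :=
          Real.rpow_le_rpow_of_nonpos (by norm_num) hhalf h
        have h2 : ((1:ℝ)/2) ^ m = 2 ^ |m| := by
          rw [abs_of_nonpos h, one_div,
            Real.inv_rpow (by norm_num : (0:ℝ) ≤ 2),
            ← Real.rpow_neg (by norm_num : (0:ℝ) ≤ 2)]
        linarith
    have hlog : -Real.log x ≤ 2 * (1 - x) := by
      have h4 : Real.log x⁻¹ ≤ x⁻¹ - 1 := Real.log_le_sub_one_of_pos (by positivity)
      rw [Real.log_inv] at h4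
      have h5 : x⁻¹ - 1 ≤ 2 * (1 - x) := by
        rw [inv_eq_one_div, div_sub' hx0.ne', div_le_iff₀ hx0]
        nlinarith
      linarith
    have hlog0 : 0 ≤ -Real.log x := by
      simp only [neg_nonneg]; exact Real.log_nonpos hx0.le hx1.le
    calc |x ^ (μ - 1) - x ^ (ν - 1)| * (1 - x) ^ (ε - 1)
        ≤ (|μ - ν| * x ^ m * (-Real.log x)) * (1 - x)⁻¹ := by
          rw [← hinv]
          exact mul_le_mul h3 hpow hpow0 (by positivity)
      _ ≤ (|μ - ν| * (2 ^ |m|) * (2 * (1 - x))) * (1 - x)⁻¹ := by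
          apply mul_le_mul_of_nonneg_right _ (by positivity)
          have : |μ - ν| * x ^ m ≤ |μ - ν| * 2 ^ |m| :=
            mul_le_mul_of_nonneg_left hxm (abs_nonneg _)
          nlinarith [abs_nonneg (μ - ν), (Real.rpow_pos_of_pos hx0 m).le]
      _ = 2 * |μ - ν| * 2 ^ |m| * ((1 - x) * (1 - x)⁻¹) := by ring
      _ = 2 * |μ - ν| * 2 ^ |m| := by rw [mul_inv_cancel₀ h1x.ne']; ring
      _ ≤ 2 * (x ^ (μ - 1) + x ^ (ν - 1)) + 2 * |μ - ν| * 2 ^ |m| := by linarith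
end aux

/-- The digamma function `ψ = Γ'/Γ`. -/
noncomputable def digamma (x : ℝ) : ℝ := deriv Real.Gamma x / Real.Gamma x

set_option maxHeartbeats 1000000 in
theorem integral_digamma_diff (ν μ : ℝ) (hν : 0 < ν) (hμ : 0 < μ) :
    ∫ x in (0:ℝ)..1, (x ^ (μ - 1) - x ^ (ν - 1)) / (1 - x) = digamma ν - digamma μ := by
  have hΓμ : Real.Gamma μ ≠ 0 := (Real.Gamma_pos_of_pos hμ).ne'
  have hΓν : Real.Gamma ν ≠ 0 := (Real.Gamma_pos_of_pos hν).ne'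
  set l : Filter ℝ := 𝓝[>] (0:ℝ) with hl
  set F : ℝ → ℝ → ℝ := fun ε x => (x ^ (μ - 1) - x ^ (ν - 1)) * (1 - x) ^ (ε - 1) with hF
  set f : ℝ → ℝ := fun x => (x ^ (μ - 1) - x ^ (ν - 1)) / (1 - x) with hf
  set g : ℝ → ℝ := fun x =>
    2 * (x ^ (μ - 1) + x ^ (ν - 1)) + 2 * |μ - ν| * 2 ^ |min μ ν - 1| with hg
  set φ : ℝ → ℝ := fun ε =>
    Real.Gamma μ / Real.Gamma (μ + ε) - Real.Gamma ν / Real.Gamma (ν + ε) with hφdef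
  -- Step A : dominated convergence
  have hIocl : Set.Ioc (0:ℝ) 1 ∈ l := Ioc_mem_nhdsGT_of_mem (by constructor <;> norm_num)
  have hmeas : ∀ᶠ ε in l, AEStronglyMeasurable (F ε) (volume.restrict (Set.Ioo 0 1)) := by
    apply Filter.Eventually.of_forall
    intro ε
    apply Measurable.aestronglyMeasurable
    fun_prop
  have hbound : ∀ᶠ ε in l, ∀ᵐ x ∂(volume.restrict (Set.Ioo (0:ℝ) 1)), ‖F ε x‖ ≤ g x := by
    filter_upwards [hIocl] with ε hε
    filter_upwards [ae_restrict_mem measurableSet_Ioo] with x hx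
    exact bound_key μ ν (Set.Ioo_subset_Ioc_self hx) hε.1 hε.2
  have hgint : IntegrableOn g (Set.Ioo (0:ℝ) 1) := by
    have i1 : IntegrableOn (fun x : ℝ => x ^ (μ - 1)) (Set.Ioc (0:ℝ) 1) := by
      have h := intervalIntegral.intervalIntegrable_rpow' (a := (0:ℝ)) (b := 1)
        (by linarith : (-1:ℝ) < μ - 1)
      rwa [intervalIntegrable_iff, Set.uIoc_of_le zero_le_one] at h
    have i2 : IntegrableOn (fun x : ℝ => x ^ (ν - 1)) (Set.Ioc (0:ℝ) 1) := by
      have h := intervalIntegral.intervalIntegrable_rpow' (a := (0:ℝ)) (b := 1)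
        (by linarith : (-1:ℝ) < ν - 1)
      rwa [intervalIntegrable_iff, Set.uIoc_of_le zero_le_one] at h
    have i3 : IntegrableOn (fun _ : ℝ => 2 * |μ - ν| * 2 ^ |min μ ν - 1|)
        (Set.Ioc (0:ℝ) 1) := integrableOn_const measure_Ioc_lt_top.ne
    have i4 : IntegrableOn (fun x : ℝ =>
        2 * (x ^ (μ - 1) + x ^ (ν - 1)) + 2 * |μ - ν| * 2 ^ |min μ ν - 1|)
        (Set.Ioc (0:ℝ) 1) := ((i1.add i2).const_mul 2).add i3
    exact i4.mono_set Set.Ioo_subset_Ioc_self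
  have hlim : ∀ᵐ x ∂(volume.restrict (Set.Ioo (0:ℝ) 1)),
      Tendsto (fun ε => F ε x) l (𝓝 (f x)) := by
    filter_upwards [ae_restrict_mem measurableSet_Ioo] with x hx
    have h1x : (0:ℝ) < 1 - x := by linarith [hx.2]
    have hc : Continuous fun ε : ℝ => (1 - x) ^ (ε - 1) := by
      simp_rw [Real.rpow_def_of_pos h1x]
      fun_prop
    have h2 := (hc.tendsto 0).mono_left (nhdsWithin_le_nhds : l ≤ 𝓝 0)
    have h3 : ((1:ℝ) - x) ^ ((0:ℝ) - 1) = (1 - x)⁻¹ := by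
      rw [zero_sub, Real.rpow_neg_one]
    have h4 := h2.const_mul (x ^ (μ - 1) - x ^ (ν - 1))
    rw [h3] at h4
    simpa [hF, hf, div_eq_mul_inv, mul_comm] using h4
  have hDCT : Tendsto (fun ε => ∫ x in Set.Ioo (0:ℝ) 1, F ε x) l
      (𝓝 (∫ x in Set.Ioo (0:ℝ) 1, f x)) :=
    MeasureTheory.tendsto_integral_filter_of_dominated_convergence g hmeas hbound hgint hlim
  -- Step B : the Beta identity for small ε
  have hEq : ∀ᶠ ε in l, ∫ x in Set.Ioo (0:ℝ) 1, F ε x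
      = Real.Gamma (ε + 1) * (φ ε / ε) := by
    filter_upwards [hIocl] with ε hε
    have hε0 : (0:ℝ) < ε := hε.1
    have hΓμε : Real.Gamma (μ + ε) ≠ 0 := (Real.Gamma_pos_of_pos (by linarith)).ne'
    have hΓνε : Real.Gamma (ν + ε) ≠ 0 := (Real.Gamma_pos_of_pos (by linarith)).ne'
    have key : ∫ x in Set.Ioo (0:ℝ) 1, F ε x
        = Real.Gamma μ * Real.Gamma ε / Real.Gamma (μ + ε)
          - Real.Gamma ν * Real.Gamma ε / Real.Gamma (ν + ε) := by
      rw [← MeasureTheory.integral_Ioc_eq_integral_Ioo,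
        ← intervalIntegral.integral_of_le zero_le_one]
      have hsub : ∀ x : ℝ, F ε x = x ^ (μ - 1) * (1 - x) ^ (ε - 1)
          - x ^ (ν - 1) * (1 - x) ^ (ε - 1) := fun x => by rw [hF]; ring
      simp_rw [hsub]
      rw [intervalIntegral.integral_sub (betaReal_intervalIntegrable hμ hε0)
        (betaReal_intervalIntegrable hν hε0),
        betaReal_eq hμ hε0, betaReal_eq hν hε0]
    rw [key, hφdef]
    have hΓε : Real.Gamma ε = Real.Gamma (ε + 1) / ε := by
      rw [Real.Gamma_add_one hε0.ne', mul_div_cancel_left₀ _ hε0.ne']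
    rw [hΓε]
    field_simp
  -- Step C : the limit of the right-hand side
  have hne : ∀ s : ℝ, 0 < s → ∀ m : ℕ, s ≠ -(m:ℝ) := by
    intro s hs m
    have : (0:ℝ) ≤ m := Nat.cast_nonneg m
    exact ne_of_gt (by linarith)
  have hderiv : ∀ s : ℝ, 0 < s →
      HasDerivAt (fun ε : ℝ => Real.Gamma (s + ε)) (deriv Real.Gamma s) 0 := by
    intro s hs
    have hd : DifferentiableAt ℝ Real.Gamma s := Real.differentiableAt_Gamma (hne s hs)
    have hadd : HasDerivAt (fun ε : ℝ => s + ε) 1 0 := by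
      simpa using (hasDerivAt_id (0:ℝ)).const_add s
    have hg : HasDerivAt Real.Gamma (deriv Real.Gamma s) ((fun ε : ℝ => s + ε) 0) := by
      simpa using hd.hasDerivAt
    have := hg.comp (0:ℝ) hadd
    simpa [Function.comp_def] using this
  have hq : ∀ s : ℝ, 0 < s →
      HasDerivAt (fun ε : ℝ => Real.Gamma s / Real.Gamma (s + ε)) (-digamma s) 0 := by
    intro s hs
    have hΓs : Real.Gamma s ≠ 0 := (Real.Gamma_pos_of_pos hs).ne'
    have h := (hasDerivAt_const (0:ℝ) (Real.Gamma s)).div (hderiv s hs)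
      (by simpa using hΓs)
    refine h.congr_deriv ?_
    rw [digamma]
    field_simp [add_zero]
    ring
  have hφ0 : φ 0 = 0 := by simp [hφdef, div_self hΓμ, div_self hΓν]
  have hφ' : HasDerivAt φ (digamma ν - digamma μ) 0 := by
    have := (hq μ hμ).sub (hq ν hν)
    refine this.congr_deriv ?_
    ring
  have hslope : Tendsto (fun ε => φ ε / ε) l (𝓝 (digamma ν - digamma μ)) := by
    have h1 := hasDerivAt_iff_tendsto_slope.mp hφ'
    have h2 : l ≤ 𝓝[≠] (0:ℝ) :=
      nhdsWithin_mono 0 (fun x hx => ne_of_gt hx)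
    have h3 := h1.mono_left h2
    apply h3.congr'
    filter_upwards [self_mem_nhdsWithin] with ε (hε : (0:ℝ) < ε)
    rw [slope_def_field, hφ0]
    simp
  have hΓ1 : Tendsto (fun ε : ℝ => Real.Gamma (ε + 1)) l (𝓝 1) := by
    have hc : ContinuousAt Real.Gamma 1 :=
      (Real.differentiableAt_Gamma (hne 1 one_pos)).continuousAt
    have h2 : Tendsto (fun ε : ℝ => ε + 1) l (𝓝 1) := by
      have hcont : Continuous (fun ε : ℝ => ε + 1) := by fun_prop
      have := hcont.tendsto (0:ℝ)
      simpa using this.mono_left (nhdsWithin_le_nhds : l ≤ 𝓝 0)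
    have := hc.tendsto.comp h2
    simpa [Real.Gamma_one, Function.comp_def] using this
  have hRHS : Tendsto (fun ε => Real.Gamma (ε + 1) * (φ ε / ε)) l
      (𝓝 (digamma ν - digamma μ)) := by
    have := hΓ1.mul hslope
    simpa using this
  have hL2 : Tendsto (fun ε => ∫ x in Set.Ioo (0:ℝ) 1, F ε x) l
      (𝓝 (digamma ν - digamma μ)) := hRHS.congr' (hEq.mono fun ε h => h.symm)
  have hfinal : ∫ x in Set.Ioo (0:ℝ) 1, f x = digamma ν - digamma μ :=
    tendsto_nhds_unique hDCT hL2
  rw [intervalIntegral.integral_of_le zero_le_one, MeasureTheory.integral_Ioc_eq_integral_Ioo]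
  exact hfinal
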